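/- (Full high-energy expansion of the coefficient vector q, d=2; formula (4.14), refining Theorem 3.4 for d=2.) For every M ∈ ℕ there exist constants C > 0 and κ₀ > 1 such that for all κ ≥ κ₀ the matrix A(κ) is invertible and for all k ∈ ℝ² with |k| = κ and all j ∈ {1,…,n} one has |q_j(k) + 2π (ln κ)^{−1} Σ_{m=0}^M (−2π)^m (ln κ)^{−m} (α_j − i/4)^m e^{i k·y_j}| ≤ C (ln κ)^{−M−2}. In particular q_j(k) = −2π(ln κ)^{−1} e^{ik·y_j} + 4π²(ln κ)^{−2}(α_j − i/4) e^{ik·y_j} + O((ln κ)^{−3}) as κ → +∞. -/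

import Mathlib

open Complex Finset Matrix

noncomputable section

/-- The matrix `A(κ) = (ln κ/(2π)) I + Z + G(κ)` for a two-dimensional multipoint
potential, where `Z = diag(α_j - i/4)`. -/
def A2 (n : ℕ) (α : Fin n → ℂ) (G : ℝ → Matrix (Fin n) (Fin n) ℂ) (κ : ℝ) :
    Matrix (Fin n) (Fin n) ℂ :=
  ((Real.log κ / (2 * Real.pi) : ℝ) : ℂ) • (1 : Matrix (Fin n) (Fin n) ℂ) +
    Matrix.diagonal (fun j => α j - Complex.I / 4) + G κ

/-- `q(k) = A(κ)⁻¹ b(k)` with `b(k)_j = -e^{i k·y_j}`. -/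
def q2 (n : ℕ) (y : Fin n → EuclideanSpace ℝ (Fin 2)) (α : Fin n → ℂ)
    (G : ℝ → Matrix (Fin n) (Fin n) ℂ) (κ : ℝ) (k : EuclideanSpace ℝ (Fin 2)) :
    Fin n → ℂ :=
  (A2 n α G κ)⁻¹ *ᵥ fun j => -Complex.exp (Complex.I * (inner ℝ k (y j) : ℝ))

/-- The scattering amplitude `f(k,ℓ) = (2π)⁻² Σ_j q_j(k) e^{-iℓ·y_j}`. -/
def f2 (n : ℕ) (y : Fin n → EuclideanSpace ℝ (Fin 2)) (α : Fin n → ℂ)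
    (G : ℝ → Matrix (Fin n) (Fin n) ℂ) (κ : ℝ) (k ℓ : EuclideanSpace ℝ (Fin 2)) : ℂ :=
  ((2 * Real.pi : ℂ) ^ 2)⁻¹ *
    ∑ j, q2 n y α G κ k j * Complex.exp (-Complex.I * (inner ℝ ℓ (y j) : ℝ))

namespace Stmt7Aux
attribute [local instance] Matrix.linftyOpNormedAddCommGroup Matrix.linftyOpNormedRing
  Matrix.linftyOpNormedSpace Matrix.linftyOpNormedAlgebra

variable {n : ℕ}

lemma norm_le_of_row (A : Matrix (Fin n) (Fin n) ℂ) {r : ℝ} (hr : 0 ≤ r)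
    (h : ∀ i, ∑ j, ‖A i j‖ ≤ r) : ‖A‖ ≤ r := by
  rw [Matrix.linfty_opNorm_def]
  have : (Finset.univ : Finset (Fin n)).sup (fun i => ∑ j, ‖A i j‖₊) ≤ ⟨r, hr⟩ :=
    Finset.sup_le fun i _ => by
      apply NNReal.coe_le_coe.mp
      push_cast
      exact h i
  exact_mod_cast this

lemma norm_one_le : ‖(1 : Matrix (Fin n) (Fin n) ℂ)‖ ≤ 1 := by
  apply norm_le_of_row _ zero_le_one
  intro i
  calc ∑ j, ‖(1 : Matrix (Fin n) (Fin n) ℂ) i j‖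
      = ∑ j, if i = j then (1:ℝ) else 0 :=
        Finset.sum_congr rfl fun j _ => by rw [Matrix.one_apply]; split <;> simp
    _ ≤ 1 := by simp

lemma pow_norm_le {A : Matrix (Fin n) (Fin n) ℂ} {r : ℝ} (h1 : 1 ≤ r) (hA : ‖A‖ ≤ r) :
    ∀ m, ‖A ^ m‖ ≤ r ^ m
  | 0 => by rw [pow_zero, pow_zero]; exact norm_one_le
  | (m+1) => by
      have hr0 : (0:ℝ) ≤ r := le_trans zero_le_one h1
      calc ‖A^(m+1)‖ = ‖A^m * A‖ := by rw [pow_succ]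
        _ ≤ ‖A^m‖ * ‖A‖ := norm_mul_le _ _
        _ ≤ r^m * r := mul_le_mul (pow_norm_le h1 hA m) hA (norm_nonneg _) (by positivity)
        _ = r^(m+1) := (pow_succ r m).symm

lemma pow_sub_norm_le {X Z : Matrix (Fin n) (Fin n) ℂ} {r : ℝ} (h1 : 1 ≤ r)
    (hX : ‖X‖ ≤ r) (hZ : ‖Z‖ ≤ r) :
    ∀ m : ℕ, ‖X ^ m - Z ^ m‖ ≤ m * r ^ m * ‖X - Z‖
  | 0 => by simp
  | (m+1) => by
      have hr0 : (0:ℝ) ≤ r := le_trans zero_le_one h1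
      have h2 := pow_sub_norm_le h1 hX hZ m
      have h3 := pow_norm_le h1 hZ m
      have hXZ : (0:ℝ) ≤ ‖X - Z‖ := norm_nonneg _
      have hid : X^(m+1) - Z^(m+1) = (X^m - Z^m) * X + Z^m * (X - Z) := by
        rw [pow_succ, pow_succ]; noncomm_ring
      calc ‖X^(m+1) - Z^(m+1)‖ = ‖(X^m - Z^m) * X + Z^m * (X - Z)‖ := by rw [hid]
        _ ≤ ‖(X^m - Z^m) * X‖ + ‖Z^m * (X - Z)‖ := norm_add_le _ _
        _ ≤ ‖X^m - Z^m‖ * ‖X‖ + ‖Z^m‖ * ‖X - Z‖ := add_le_add (norm_mul_le _ _) (norm_mul_le _ _)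
        _ ≤ (m * r^m * ‖X - Z‖) * r + r^m * ‖X - Z‖ :=
            add_le_add (mul_le_mul h2 hX (norm_nonneg _) (by positivity))
              (mul_le_mul_of_nonneg_right h3 hXZ)
        _ ≤ (m+1 : ℕ) * r^(m+1) * ‖X - Z‖ := by
            have h5 : r^m * ‖X - Z‖ ≤ r^m * r * ‖X - Z‖ := by
              nlinarith [mul_nonneg (mul_nonneg (sub_nonneg.mpr h1) (pow_nonneg hr0 m)) hXZ]
            push_cast
            rw [pow_succ]
            have e1 : (↑m+1) * (r^m*r)*‖X-Z‖ = ↑m * r^m * ‖X-Z‖ * r + r^m*r*‖X-Z‖ := by ring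
            rw [e1]
            linarith

lemma geom_id (B : Matrix (Fin n) (Fin n) ℂ) (M : ℕ) :
    (∑ i ∈ Finset.range M, (-B)^i) * (1 + B) = 1 - (-B)^M := by
  have h := geom_sum_mul (-B) M
  have h2 : (-B) - 1 = -(1+B) := by abel
  rw [h2, mul_neg] at h
  rw [← neg_neg ((∑ i ∈ Finset.range M, (-B)^i) * (1 + B)), h]
  abel

lemma neumann {B Si : Matrix (Fin n) (Fin n) ℂ} (h : (1 + B) * Si = 1) (M : ℕ) :
    Si = (∑ m ∈ Finset.range (M+1), (-B)^m) + (-B)^(M+1) * Si := by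
  have hg := congrArg (· * Si) (geom_id B (M+1))
  rw [mul_assoc, h, mul_one, sub_mul, one_mul] at hg
  rw [hg]
  abel

set_option maxHeartbeats 1000000 in
lemma key (n : ℕ) (y : Fin n → EuclideanSpace ℝ (Fin 2)) (α : Fin n → ℂ)
    (G : ℝ → Matrix (Fin n) (Fin n) ℂ)
    (hGdiag : ∀ κ : ℝ, 1 ≤ κ → ∀ j, G κ j j = 0)
    (c : ℝ) (hc : 0 < c)
    (hG : ∀ κ : ℝ, 1 ≤ κ → ∀ j j' : Fin n, j ≠ j' → ‖G κ j j'‖ ≤ c / Real.sqrt κ)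
    (M : ℕ) : ∃ C > (0 : ℝ), ∃ κ₀ > (1 : ℝ), ∀ κ ≥ κ₀, IsUnit (A2 n α G κ) ∧
      ∀ k : EuclideanSpace ℝ (Fin 2), ‖k‖ = κ → ∀ j : Fin n,
        ‖q2 n y α G κ k j +
            (2 * Real.pi : ℂ) / (Real.log κ : ℂ) *
              ∑ m ∈ Finset.range (M + 1),
                (-2 * Real.pi : ℂ) ^ m / (Real.log κ : ℂ) ^ m *
                  ((α j - Complex.I / 4) ^ m *
                    Complex.exp (Complex.I * (inner ℝ k (y j) : ℝ)))‖ ≤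
          C / (Real.log κ) ^ (M + 2) := by
  -- global constants
  set Zm : Matrix (Fin n) (Fin n) ℂ := Matrix.diagonal (fun j => α j - Complex.I / 4) with hZm
  set R : ℝ := ‖Zm‖ + n * c + 1 with hRdef
  have hnc : (0:ℝ) ≤ n * c := by positivity
  have hR1 : (1:ℝ) ≤ R := by have := norm_nonneg Zm; simp only [hRdef]; linarith
  have hR0 : (0:ℝ) < R := lt_of_lt_of_le one_pos hR1
  set D : ℝ := ∑ m ∈ Finset.range (M+1), (2*Real.pi)^(m+1) * (m * R^m) with hDdef
  have hD0 : 0 ≤ D := Finset.sum_nonneg fun m _ => by positivity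
  set C₁ : ℝ := 2 * (2*Real.pi)^(M+2) * R^(M+1) with hC1def
  have hC10 : 0 ≤ C₁ := by positivity
  clear_value Zm R D C₁
  refine ⟨D * (n*c) + C₁ + 1, by positivity, ?_⟩
  -- eventual bound (log κ)^(M+2) ≤ √κ
  have hlo := (isLittleO_log_rpow_rpow_atTop ((M:ℝ)+2) (s := 1/2) (by norm_num)).def one_pos
  rw [Filter.eventually_atTop] at hlo
  obtain ⟨a, ha⟩ := hlo
  set κ₀ : ℝ := max (max 2 (Real.exp (max 1 (4*Real.pi*R)))) a with hκ₀def
  refine ⟨κ₀, lt_of_lt_of_le one_lt_two (le_trans (le_max_left _ _) (le_max_left _ _)), ?_⟩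
  intro κ hκ
  have hκ2 : (2:ℝ) ≤ κ := le_trans (le_trans (le_max_left _ _) (le_max_left _ _)) hκ
  have hκ1 : (1:ℝ) ≤ κ := by linarith
  have hκpos : (0:ℝ) < κ := by linarith
  set L : ℝ := Real.log κ with hLdef
  have hL : max 1 (4*Real.pi*R) ≤ L := by
    rw [hLdef, Real.le_log_iff_exp_le hκpos]
    exact le_trans (le_trans (le_max_right _ _) (le_max_left _ _)) hκ
  have hL1 : (1:ℝ) ≤ L := le_trans (le_max_left _ _) hL
  have hL4 : 4*Real.pi*R ≤ L := le_trans (le_max_right _ _) hL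
  have hLpos : (0:ℝ) < L := lt_of_lt_of_le one_pos hL1
  have hLC : ((L:ℝ):ℂ) ≠ 0 := by exact_mod_cast ne_of_gt hLpos
  have hLpow : (0:ℝ) < L^(M+2) := by positivity
  clear_value L
  -- √κ bound
  have hsq : L^(M+2) ≤ Real.sqrt κ := by
    have h1 := ha κ (le_trans (le_max_right _ _) hκ)
    rw [show ((M:ℝ)+2) = ((M+2:ℕ):ℝ) by push_cast; ring, Real.rpow_natCast] at h1
    have hlog0 : (0:ℝ) ≤ Real.log κ := by rw [← hLdef]; linarith
    rw [Real.norm_eq_abs, Real.norm_eq_abs, _root_.abs_of_nonneg (pow_nonneg hlog0 _),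
      _root_.abs_of_nonneg (Real.rpow_nonneg (le_of_lt hκpos) _), one_mul] at h1
    rw [hLdef, Real.sqrt_eq_rpow]
    exact h1
  have hsqpos : (0:ℝ) < Real.sqrt κ := lt_of_lt_of_le hLpow hsq
  -- norm of G κ
  have hGn : ‖G κ‖ ≤ n * c / Real.sqrt κ := by
    apply norm_le_of_row _ (by positivity)
    intro i
    calc ∑ j, ‖G κ i j‖ ≤ ∑ _j : Fin n, c / Real.sqrt κ := by
          refine Finset.sum_le_sum fun j _ => ?_
          rcases eq_or_ne i j with rfl | hij
          · rw [hGdiag κ hκ1 i, norm_zero]; positivity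
          · exact hG κ hκ1 i j hij
      _ = n * c / Real.sqrt κ := by
          rw [Finset.sum_const, Finset.card_univ, Fintype.card_fin, nsmul_eq_mul, mul_div_assoc]
  have hGnc : ‖G κ‖ ≤ n * c := le_trans hGn (by
    rw [div_le_iff₀ hsqpos]
    nlinarith [Real.one_le_sqrt.mpr hκ1])
  -- the matrices
  set tC : ℂ := ((2*Real.pi/L : ℝ) : ℂ) with htCdef
  have htCnorm : ‖tC‖ = 2*Real.pi/L := by
    rw [htCdef, Complex.norm_real, Real.norm_eq_abs, _root_.abs_of_nonneg (by positivity)]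
  clear_value tC
  set X : Matrix (Fin n) (Fin n) ℂ := Zm + G κ with hXdef
  set B : Matrix (Fin n) (Fin n) ℂ := tC • X with hBdef
  set Sm : Matrix (Fin n) (Fin n) ℂ := 1 + B with hSmdef
  have hXR : ‖X‖ ≤ R := by
    calc ‖X‖ ≤ ‖Zm‖ + ‖G κ‖ := norm_add_le _ _
      _ ≤ R := by rw [hRdef]; linarith
  have hZmR : ‖Zm‖ ≤ R := by rw [hRdef]; linarith
  have hBn : ‖B‖ ≤ 2*Real.pi*R/L := by
    rw [hBdef, norm_smul, htCnorm]
    calc 2*Real.pi/L * ‖X‖ ≤ 2*Real.pi/L * R := by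
          exact mul_le_mul_of_nonneg_left hXR (by positivity)
      _ = 2*Real.pi*R/L := by ring
  have hBhalf : ‖B‖ ≤ 1/2 := by
    refine le_trans hBn ?_
    rw [div_le_iff₀ hLpos]
    nlinarith
  have hBlt : ‖B‖ < 1 := lt_of_le_of_lt hBhalf (by norm_num)
  have hSmUnit : IsUnit Sm := by
    have := isUnit_one_sub_of_norm_lt_one (x := -B) (by simpa using hBlt)
    simpa [hSmdef, sub_neg_eq_add] using this
  set Si : Matrix (Fin n) (Fin n) ℂ := Sm⁻¹ with hSidef
  have hSS : Sm * Si = 1 :=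
    Matrix.mul_nonsing_inv Sm ((Matrix.isUnit_iff_isUnit_det Sm).mp hSmUnit)
  have hSi2 : ‖Si‖ ≤ 2 := by
    have he : Si = 1 - B * Si := by
      have h' : Si + B * Si = 1 := by
        have := hSS
        rwa [hSmdef, add_mul, one_mul] at this
      linear_combination (norm := noncomm_ring) h'
    have hb : ‖B * Si‖ ≤ (1/2) * ‖Si‖ :=
      le_trans (norm_mul_le _ _) (mul_le_mul_of_nonneg_right hBhalf (norm_nonneg _))
    have := norm_sub_le (1 : Matrix (Fin n) (Fin n) ℂ) (B * Si)
    rw [← he] at this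
    have h1 := norm_one_le (n := n)
    linarith
  -- A2 = (L/(2π)) • Sm and its inverse
  have hu : ((L / (2*Real.pi) : ℝ) : ℂ) * tC = 1 := by
    have hureal : (L/(2*Real.pi)) * (2*Real.pi/L) = 1 := by
      field_simp
    rw [htCdef, ← Complex.ofReal_mul, hureal, Complex.ofReal_one]
  have hA2 : A2 n α G κ = ((L / (2*Real.pi) : ℝ) : ℂ) • Sm := by
    rw [A2, hSmdef, hBdef, hXdef, smul_add, smul_smul, hu, one_smul, ← hZm, ← hLdef]
    abel
  have hprod : A2 n α G κ * (tC • Si) = 1 := by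
    rw [hA2, Matrix.smul_mul, Matrix.mul_smul, smul_smul, hu, one_smul, hSS]
  have hAunit : IsUnit (A2 n α G κ) := by
    refine ⟨⟨A2 n α G κ, tC • Si, hprod, ?_⟩, rfl⟩
    rw [mul_eq_one_comm]
    exact hprod
  have hAinv : (A2 n α G κ)⁻¹ = tC • Si := Matrix.inv_eq_right_inv hprod
  clear_value X B Sm Si
  refine ⟨hAunit, ?_⟩
  intro k hk j
  set b : Fin n → ℂ := fun j' => -Complex.exp (Complex.I * ((inner ℝ k (y j') : ℝ) : ℂ)) with hbdef
  have hbnorm : ‖b‖ ≤ 1 := by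
    refine (pi_norm_le_iff_of_nonneg zero_le_one).mpr fun i => ?_
    rw [hbdef]
    simp only [norm_neg]
    rw [mul_comm, Complex.norm_exp_ofReal_mul_I]
  have hq2 : q2 n y α G κ k = tC • (Si *ᵥ b) := by
    rw [q2, hAinv, Matrix.smul_mulVec]
  -- Neumann splitting
  have hNeu : Si = (∑ m ∈ Finset.range (M+1), (-B)^m) + (-B)^(M+1) * Si :=
    neumann (by rw [← hSmdef]; exact hSS) M
  have hnegB : ∀ m : ℕ, (-B)^m = (-tC)^m • X^m := by
    intro m
    rw [hBdef, ← neg_smul, smul_pow]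
  -- main identity
  have hsub : ∀ m : ℕ, ((X^m - Zm^m) *ᵥ b) j = (X^m *ᵥ b) j - ((Zm^m) *ᵥ b) j := by
    intro m
    rw [Matrix.sub_mulVec]
    rfl
  have hmain : q2 n y α G κ k j +
      (2 * Real.pi : ℂ) / ((L:ℝ) : ℂ) *
        ∑ m ∈ Finset.range (M + 1),
          (-2 * Real.pi : ℂ) ^ m / ((L:ℝ) : ℂ) ^ m *
            ((α j - Complex.I / 4) ^ m *
              Complex.exp (Complex.I * ((inner ℝ k (y j) : ℝ) : ℂ)))
      = tC * (∑ m ∈ Finset.range (M+1), (-tC)^m * (((X^m - Zm^m) *ᵥ b) j))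
        + tC * ((((-B)^(M+1) * Si) *ᵥ b) j) := by
    have hTc : (2 * Real.pi : ℂ) / ((L:ℝ) : ℂ) = tC := by
      rw [htCdef]; push_cast; ring
    have hTm : ∀ m : ℕ, (-2 * Real.pi : ℂ) ^ m / ((L:ℝ) : ℂ) ^ m = (-tC)^m := by
      intro m
      rw [← div_pow]
      congr 1
      rw [htCdef]; push_cast; ring
    have hZpow : ∀ m : ℕ, ((Zm^m) *ᵥ b) j = (α j - Complex.I/4)^m * b j := by
      intro m
      rw [hZm, Matrix.diagonal_pow, Matrix.mulVec_diagonal]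
      rfl
    have hq : q2 n y α G κ k j
        = tC * (∑ m ∈ Finset.range (M+1), (-tC)^m * ((X^m *ᵥ b) j))
          + tC * ((((-B)^(M+1) * Si) *ᵥ b) j) := by
      have h0 : (∑ m ∈ Finset.range (M+1), (-B)^m) *ᵥ b
          = ∑ m ∈ Finset.range (M+1), ((-B)^m *ᵥ b) :=
        map_sum (Matrix.mulVec.addMonoidHomLeft b) (fun m => (-B)^m) (Finset.range (M+1))
      have h1 : Si *ᵥ b = (∑ m ∈ Finset.range (M+1), ((-tC)^m • (X^m *ᵥ b)))
          + ((-B)^(M+1) * Si) *ᵥ b := by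
        nth_rewrite 1 [hNeu]
        rw [Matrix.add_mulVec, h0]
        congr 1
        exact Finset.sum_congr rfl fun m _ => by rw [hnegB m, Matrix.smul_mulVec]
      rw [hq2, h1]
      simp only [Pi.smul_apply, Pi.add_apply, Finset.sum_apply, smul_eq_mul, mul_add,
        Finset.mul_sum]
    have e1 : ∑ m ∈ Finset.range (M + 1),
          (-2 * Real.pi : ℂ) ^ m / ((L:ℝ) : ℂ) ^ m *
            ((α j - Complex.I / 4) ^ m *
              Complex.exp (Complex.I * ((inner ℝ k (y j) : ℝ) : ℂ)))
        = -∑ m ∈ Finset.range (M+1), (-tC)^m * ((Zm^m *ᵥ b) j) := by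
      rw [← Finset.sum_neg_distrib]
      refine Finset.sum_congr rfl fun m _ => ?_
      rw [hTm m, hZpow m]
      show (-tC)^m * ((α j - Complex.I/4)^m *
          Complex.exp (Complex.I * ((inner ℝ k (y j) : ℝ) : ℂ)))
        = -((-tC)^m * ((α j - Complex.I/4)^m * b j))
      simp only [hbdef]
      ring
    have e2 : ∑ m ∈ Finset.range (M+1), (-tC)^m * (((X^m - Zm^m) *ᵥ b) j)
        = (∑ m ∈ Finset.range (M+1), (-tC)^m * ((X^m *ᵥ b) j))
          - ∑ m ∈ Finset.range (M+1), (-tC)^m * ((Zm^m *ᵥ b) j) := by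
      rw [← Finset.sum_sub_distrib]
      exact Finset.sum_congr rfl fun m _ => by rw [hsub m]; ring
    rw [hq, hTc, e1, e2]
    ring
  -- estimates
  have hXb : ∀ m : ℕ, ‖((X^m - Zm^m) *ᵥ b) j‖ ≤ m * R^m * ‖G κ‖ := by
    intro m
    have h3 : X - Zm = G κ := by rw [hXdef, add_sub_cancel_left]
    calc ‖((X^m - Zm^m) *ᵥ b) j‖ ≤ ‖(X^m - Zm^m) *ᵥ b‖ := norm_le_pi_norm _ j
      _ ≤ ‖X^m - Zm^m‖ * ‖b‖ := Matrix.linfty_opNorm_mulVec _ _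
      _ ≤ ‖X^m - Zm^m‖ * 1 := mul_le_mul_of_nonneg_left hbnorm (norm_nonneg _)
      _ = ‖X^m - Zm^m‖ := mul_one _
      _ ≤ m * R^m * ‖X - Zm‖ := pow_sub_norm_le hR1 hXR hZmR m
      _ = m * R^m * ‖G κ‖ := by rw [h3]
  have hrem : ‖(((-B)^(M+1) * Si) *ᵥ b) j‖ ≤ (2*Real.pi*R/L)^(M+1) * 2 := by
    calc ‖(((-B)^(M+1) * Si) *ᵥ b) j‖ ≤ ‖((-B)^(M+1) * Si) *ᵥ b‖ := norm_le_pi_norm _ j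
      _ ≤ ‖(-B)^(M+1) * Si‖ * ‖b‖ := Matrix.linfty_opNorm_mulVec _ _
      _ ≤ ‖(-B)^(M+1) * Si‖ := mul_le_of_le_one_right (norm_nonneg _) hbnorm
      _ ≤ ‖(-B)^(M+1)‖ * ‖Si‖ := norm_mul_le _ _
      _ ≤ ‖B‖^(M+1) * 2 := by
          have h4 := norm_pow_le' (-B) (Nat.succ_pos M)
          rw [norm_neg] at h4
          exact mul_le_mul h4 hSi2 (norm_nonneg _) (by positivity)
      _ ≤ (2*Real.pi*R/L)^(M+1) * 2 := by
          have h5 := pow_le_pow_left₀ (norm_nonneg B) hBn (M+1)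
          linarith
  have hterm1 : 2*Real.pi/L * (∑ m ∈ Finset.range (M+1),
        (2*Real.pi/L)^m * (m * R^m * ‖G κ‖)) ≤ D * (n*c) / L^(M+2) := by
    have hle : 2*Real.pi/L ≤ 2*Real.pi := div_le_self (by positivity) hL1
    calc 2*Real.pi/L * (∑ m ∈ Finset.range (M+1), (2*Real.pi/L)^m * (m * R^m * ‖G κ‖))
        = ∑ m ∈ Finset.range (M+1), (2*Real.pi/L)^(m+1) * (m * R^m) * ‖G κ‖ := by
          rw [Finset.mul_sum]
          exact Finset.sum_congr rfl fun m _ => by rw [pow_succ]; ring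
      _ ≤ ∑ m ∈ Finset.range (M+1), (2*Real.pi)^(m+1) * (m * R^m) * ‖G κ‖ := by
          refine Finset.sum_le_sum fun m _ => ?_
          have hp : (2*Real.pi/L)^(m+1) ≤ (2*Real.pi)^(m+1) :=
            pow_le_pow_left₀ (by positivity) hle _
          exact mul_le_mul_of_nonneg_right
            (mul_le_mul_of_nonneg_right hp (by positivity)) (norm_nonneg _)
      _ = D * ‖G κ‖ := by
          rw [hDdef, Finset.sum_mul]
      _ ≤ D * (n * c / Real.sqrt κ) := mul_le_mul_of_nonneg_left hGn hD0
      _ = D * (n * c) / Real.sqrt κ := by ring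
      _ ≤ D * (n * c) / L^(M+2) := by
          apply div_le_div_of_nonneg_left (by positivity) hLpow hsq
  have hterm2 : 2*Real.pi/L * ((2*Real.pi*R/L)^(M+1) * 2) = C₁ / L^(M+2) := by
    have hLne : L ≠ 0 := ne_of_gt hLpos
    have h6 : (2*Real.pi*R/L)^(M+1) = (2*Real.pi)^(M+1)*R^(M+1)/L^(M+1) := by
      rw [div_pow, mul_pow]
    rw [hC1def, h6]
    rw [show M+2 = (M+1)+1 from rfl, pow_succ (2*Real.pi) (M+1), pow_succ L (M+1)]
    field_simp
  rw [hmain]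
  calc ‖tC * (∑ m ∈ Finset.range (M+1), (-tC)^m * (((X^m - Zm^m) *ᵥ b) j))
        + tC * ((((-B)^(M+1) * Si) *ᵥ b) j)‖
      ≤ ‖tC * (∑ m ∈ Finset.range (M+1), (-tC)^m * (((X^m - Zm^m) *ᵥ b) j))‖
        + ‖tC * ((((-B)^(M+1) * Si) *ᵥ b) j)‖ := norm_add_le _ _
    _ ≤ 2*Real.pi/L * (∑ m ∈ Finset.range (M+1), (2*Real.pi/L)^m * (m * R^m * ‖G κ‖))
        + 2*Real.pi/L * ((2*Real.pi*R/L)^(M+1) * 2) := by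
        refine add_le_add ?_ ?_
        · rw [norm_mul, htCnorm]
          refine mul_le_mul_of_nonneg_left ?_ (by positivity)
          refine (norm_sum_le _ _).trans (Finset.sum_le_sum fun m _ => ?_)
          rw [norm_mul, norm_pow, norm_neg, htCnorm]
          exact mul_le_mul_of_nonneg_left (hXb m) (by positivity)
        · rw [norm_mul, htCnorm]
          exact mul_le_mul_of_nonneg_left hrem (by positivity)
    _ ≤ D * (n*c) / L^(M+2) + C₁ / L^(M+2) := by
        rw [hterm2]
        exact add_le_add hterm1 le_rfl
    _ ≤ (D * (n*c) + C₁ + 1) / L^(M+2) := by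
        rw [← add_div]
        apply div_le_div_of_nonneg_right ?_ hLpow.le
        linarith

end Stmt7Aux

/-- Full high-energy expansion of the coefficient vector q, d = 2 (formula (4.14)),
together with its leading-order particular case. -/
theorem stmt7 (n : ℕ) (y : Fin n → EuclideanSpace ℝ (Fin 2)) (α : Fin n → ℂ)
    (hy : Function.Injective y)
    (G : ℝ → Matrix (Fin n) (Fin n) ℂ)
    (hGdiag : ∀ κ : ℝ, 1 ≤ κ → ∀ j, G κ j j = 0)
    (c : ℝ) (hc : 0 < c)
    (hG : ∀ κ : ℝ, 1 ≤ κ → ∀ j j' : Fin n, j ≠ j' → ‖G κ j j'‖ ≤ c / Real.sqrt κ) :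
    (∀ M : ℕ, ∃ C > (0 : ℝ), ∃ κ₀ > (1 : ℝ), ∀ κ ≥ κ₀, IsUnit (A2 n α G κ) ∧
      ∀ k : EuclideanSpace ℝ (Fin 2), ‖k‖ = κ → ∀ j : Fin n,
        ‖q2 n y α G κ k j +
            (2 * Real.pi : ℂ) / (Real.log κ : ℂ) *
              ∑ m ∈ Finset.range (M + 1),
                (-2 * Real.pi : ℂ) ^ m / (Real.log κ : ℂ) ^ m *
                  ((α j - Complex.I / 4) ^ m *
                    Complex.exp (Complex.I * (inner ℝ k (y j) : ℝ)))‖ ≤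
          C / (Real.log κ) ^ (M + 2)) ∧
    (∃ C > (0 : ℝ), ∃ κ₀ > (1 : ℝ), ∀ κ ≥ κ₀, IsUnit (A2 n α G κ) ∧
      ∀ k : EuclideanSpace ℝ (Fin 2), ‖k‖ = κ → ∀ j : Fin n,
        ‖q2 n y α G κ k j +
            (2 * Real.pi : ℂ) / (Real.log κ : ℂ) *
              Complex.exp (Complex.I * (inner ℝ k (y j) : ℝ)) -
            (4 * Real.pi ^ 2 : ℂ) / (Real.log κ : ℂ) ^ 2 *
              ((α j - Complex.I / 4) *
                Complex.exp (Complex.I * (inner ℝ k (y j) : ℝ)))‖ ≤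
          C / (Real.log κ) ^ 3) := by
  constructor
  · intro M
    exact Stmt7Aux.key n y α G hGdiag c hc hG M
  · obtain ⟨C, hC, κ₀, hκ₀, h⟩ := Stmt7Aux.key n y α G hGdiag c hc hG 1
    refine ⟨C, hC, κ₀, hκ₀, fun κ hκ => ⟨(h κ hκ).1, fun k hk j => ?_⟩⟩
    have h2 := (h κ hκ).2 k hk j
    have e : q2 n y α G κ k j +
          (2 * Real.pi : ℂ) / (Real.log κ : ℂ) *
            Complex.exp (Complex.I * (inner ℝ k (y j) : ℝ)) -
          (4 * Real.pi ^ 2 : ℂ) / (Real.log κ : ℂ) ^ 2 *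
            ((α j - Complex.I / 4) *
              Complex.exp (Complex.I * (inner ℝ k (y j) : ℝ)))
        = q2 n y α G κ k j +
          (2 * Real.pi : ℂ) / (Real.log κ : ℂ) *
            ∑ m ∈ Finset.range (1 + 1),
              (-2 * Real.pi : ℂ) ^ m / (Real.log κ : ℂ) ^ m *
                ((α j - Complex.I / 4) ^ m *
                  Complex.exp (Complex.I * (inner ℝ k (y j) : ℝ))) := by
      rw [Finset.sum_range_succ, Finset.sum_range_one]
      ring
    rw [e]
    exact h2
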